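/- Let (Q^n)_{n≥1} be a time consistent family of coherent lower previsions on ℒ(𝒩^n). Then there is a well-defined functional S on the set 𝒱(Σ_𝒳) of polynomial gambles, given by S(p) := Q^n(b) whenever p(θ) = Σ_{m∈𝒩^n} b(m)B_m(θ) for all θ ∈ Σ_𝒳, and S is a coherent lower prevision on the linear space 𝒱(Σ_𝒳): for all p, q ∈ 𝒱(Σ_𝒳) and all real λ ≥ 0, S(p) ≥ min_{θ∈Σ_𝒳} p(θ), S(λp) = λS(p), and S(p+q) ≥ S(p)+S(q). -/

import Mathlib

open Finset Filter Topology

/-- A coherent lower prevision on the gambles over a finite nonempty space `Ω`. -/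
def LowerPrevCoherent {Ω : Type*} [Fintype Ω] [Nonempty Ω] (P : (Ω → ℝ) → ℝ) : Prop :=
  (∀ f : Ω → ℝ, sInf (Set.range f) ≤ P f) ∧
  (∀ (f : Ω → ℝ) (l : ℝ), 0 ≤ l → P (fun ω => l * f ω) = l * P f) ∧
  (∀ f g : Ω → ℝ, P f + P g ≤ P (f + g))

/-- A linear prevision on the gambles over a finite nonempty space `Ω`. -/
def LinearPrevision {Ω : Type*} [Fintype Ω] [Nonempty Ω] (P : (Ω → ℝ) → ℝ) : Prop :=
  (∀ f g : Ω → ℝ, P (f + g) = P f + P g) ∧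
  (∀ (l : ℝ) (f : Ω → ℝ), P (fun ω => l * f ω) = l * P f) ∧
  (∀ f : Ω → ℝ, (∀ ω, 0 ≤ f ω) → 0 ≤ P f) ∧
  P (fun _ => 1) = 1

/-- Exchangeability of a lower prevision on gambles on `X^N`:
`P (πf − f) ≥ 0` for every gamble `f` and every permutation `π`. -/
def Exchangeable {X : Type*} {N : ℕ} (P : ((Fin N → X) → ℝ) → ℝ) : Prop :=
  ∀ (f : (Fin N → X) → ℝ) (π : Equiv.Perm (Fin N)),
    0 ≤ P (fun x => f (fun k => x (π k)) - f x)

/-- The set of count vectors `𝒩^n`. -/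
abbrev CVec (X : Type*) [Fintype X] (n : ℕ) : Type _ := {m : X → ℕ // ∑ x, m x = n}

noncomputable instance {X : Type*} [Fintype X] [DecidableEq X] (n : ℕ) : Fintype (CVec X n) := by
  have key : ∀ (m : CVec X n) (x : X), m.1 x < n + 1 := by
    intro m x
    have h1 : m.1 x ≤ ∑ y, m.1 y :=
      Finset.single_le_sum (fun i _ => Nat.zero_le _) (Finset.mem_univ x)
    have h2 := m.2
    omega
  exact Fintype.ofInjective (fun m : CVec X n => fun x => (⟨m.1 x, key m x⟩ : Fin (n+1)))
    (fun a b hab => Subtype.ext (funext fun x => congrArg Fin.val (congrFun hab x)))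

instance {X : Type*} [Fintype X] [DecidableEq X] [Nonempty X] (n : ℕ) :
    Nonempty (CVec X n) :=
  ⟨⟨fun x => if x = Classical.arbitrary X then n else 0, by simp⟩⟩

/-- The counting map `T^n : X^n → 𝒩^n`. -/
def countMap {X : Type*} [Fintype X] [DecidableEq X] (n : ℕ) (z : Fin n → X) : CVec X n :=
  ⟨fun x => (Finset.univ.filter fun k => z k = x).card, by
    have h := Finset.card_eq_sum_card_fiberwise (f := z) (s := Finset.univ) (t := Finset.univ)
      (fun k _ => Finset.mem_univ (z k))
    simpa using h.symm⟩

/-- `ν(m) = n!/∏ₓ mₓ!` for a count vector `m ∈ 𝒩^n`. -/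
def nu {X : Type*} [Fintype X] {n : ℕ} (m : CVec X n) : ℕ :=
  Nat.multinomial Finset.univ m.1

/-- `ν(μ − m)`, which is `0` unless `m ≤ μ` componentwise. -/
def nuSub {X : Type*} [Fintype X] {n k : ℕ} (μ : CVec X (n + k)) (m : CVec X n) : ℕ :=
  if ∀ x, m.1 x ≤ μ.1 x then Nat.multinomial Finset.univ (fun x => μ.1 x - m.1 x) else 0

/-- The multiple hyper-geometric prevision `MuHy^n(f|m) = (1/ν(m)) ∑_{z∈[m]} f(z)`. -/
noncomputable def MuHy {X : Type*} [Fintype X] [DecidableEq X] {n : ℕ}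
    (f : (Fin n → X) → ℝ) (m : CVec X n) : ℝ :=
  (∑ z ∈ Finset.univ.filter fun z : Fin n → X => countMap n z = m, f z) / (nu m : ℝ)

/-- The `X`-simplex `Σ_X`, as a subtype of `X → ℝ`. -/
abbrev SimplexPt (X : Type*) [Fintype X] : Type _ :=
  {θ : X → ℝ // (∀ x, 0 ≤ θ x) ∧ ∑ x, θ x = 1}

/-- The Bernstein basis polynomial `B_m(θ) = ν(m) ∏ₓ θₓ^{mₓ}`. -/
noncomputable def Bern {X : Type*} [Fintype X] {n : ℕ} (m : CVec X n) (θ : X → ℝ) : ℝ :=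
  (nu m : ℝ) * ∏ x, θ x ^ m.1 x

/-- The count multinomial expectation `CoMn^n(g|θ) = ∑_m g(m) B_m(θ)`. -/
noncomputable def CoMn {X : Type*} [Fintype X] [DecidableEq X] {n : ℕ} (g : CVec X n → ℝ) (θ : X → ℝ) : ℝ :=
  ∑ m : CVec X n, g m * Bern m θ

/-- The multinomial expectation `Mn^n(f|θ) = ∑_z f(z) ∏ₓ θₓ^{Tₓ(z)}`. -/
noncomputable def Mn {X : Type*} [Fintype X] [DecidableEq X] {n : ℕ}
    (f : (Fin n → X) → ℝ) (θ : X → ℝ) : ℝ :=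
  ∑ z : Fin n → X, f z * ∏ x, θ x ^ (countMap n z).1 x

/-- `CoMn^n(g|·)` as a function on the simplex. -/
noncomputable def CoMnP {X : Type*} [Fintype X] [DecidableEq X] {n : ℕ} (g : CVec X n → ℝ)
    (θ : SimplexPt X) : ℝ :=
  CoMn g θ.1

/-- `Mn^n(f|·)` as a function on the simplex. -/
noncomputable def MnP {X : Type*} [Fintype X] [DecidableEq X] {n : ℕ}
    (f : (Fin n → X) → ℝ) (θ : SimplexPt X) : ℝ :=
  Mn f θ.1

/-- Polynomial gambles on the simplex: the set `𝒱(Σ_X)`. -/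
def IsPolyGamble {X : Type*} [Fintype X] [DecidableEq X] (p : SimplexPt X → ℝ) : Prop :=
  ∃ n : ℕ, 1 ≤ n ∧ ∃ g : CVec X n → ℝ, p = fun θ => CoMnP g θ

/-- Coherence of a functional on the linear space `𝒱(Σ_X)` of polynomial gambles. -/
def CoherentOnPoly {X : Type*} [Fintype X] [DecidableEq X] (S : (SimplexPt X → ℝ) → ℝ) : Prop :=
  (∀ p, IsPolyGamble p → sInf (Set.range p) ≤ S p) ∧
  (∀ p, IsPolyGamble p → ∀ l : ℝ, 0 ≤ l → S (fun θ => l * p θ) = l * S p) ∧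
  (∀ p q, IsPolyGamble p → IsPolyGamble q → S p + S q ≤ S (p + q))

/-- Cylindrical extension of a gamble on `X^n` to `X^{n+k}`. -/
def cylExt {X : Type*} {n k : ℕ} (f : (Fin n → X) → ℝ) : (Fin (n + k) → X) → ℝ :=
  fun z => f fun i => z (Fin.castLE (Nat.le_add_right n k) i)

/-- Time consistency of a family of lower previsions on the `X^n`. -/
def PTimeConsistent {X : Type*} (P : ∀ n : ℕ, ((Fin n → X) → ℝ) → ℝ) : Prop :=
  ∀ n : ℕ, 1 ≤ n → ∀ (k : ℕ) (f : (Fin n → X) → ℝ), P n f = P (n + k) (cylExt f)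

/-- Time consistency of a family of count lower previsions on the `𝒩^n`. -/
def QTimeConsistent {X : Type*} [Fintype X] [DecidableEq X] (Q : ∀ n : ℕ, (CVec X n → ℝ) → ℝ) : Prop :=
  ∀ n : ℕ, 1 ≤ n → ∀ (k : ℕ) (h : CVec X n → ℝ),
    Q n h = Q (n + k) (fun μ => ∑ m : CVec X n, ((nuSub μ m : ℝ) * (nu m : ℝ) / (nu μ : ℝ)) * h m)

/-- The relative frequency vector `m/n ∈ Σ_X` of a count vector `m ∈ 𝒩^n`, `n ≥ 1`. -/
noncomputable def freqPt {X : Type*} [Fintype X] {n : ℕ} (hn : 0 < n) (m : CVec X n) :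
    SimplexPt X :=
  ⟨fun x => (m.1 x : ℝ) / n,
   fun x => div_nonneg (Nat.cast_nonneg _) (Nat.cast_nonneg _),
   by
    rw [← Finset.sum_div]
    have h : (∑ x, (m.1 x : ℝ)) = (n : ℝ) := by exact_mod_cast m.2
    rw [h]
    exact div_self (Nat.cast_ne_zero.mpr hn.ne')⟩

/-- `ḡ(μ) = ∑_m (ν(m) ν(μ−m) / ν(μ)) g(m)`. -/
noncomputable def gbar {X : Type*} [Fintype X] [DecidableEq X] {n k : ℕ}
    (g : CVec X n → ℝ) (μ : CVec X (n + k)) : ℝ :=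
  ∑ m : CVec X n, ((nu m : ℝ) * (nuSub μ m : ℝ) / (nu μ : ℝ)) * g m

section Aux1
variable {X : Type*} [Fintype X] [DecidableEq X]

lemma nu_pos {n : ℕ} (m : CVec X n) : 0 < nu m := Nat.multinomial_pos _ _

lemma theta_le_one (θ : SimplexPt X) (x : X) : θ.1 x ≤ 1 := by
  have := Finset.single_le_sum (f := θ.1) (fun i _ => θ.2.1 i) (Finset.mem_univ x)
  simpa [θ.2.2] using this

lemma prod_pow_le_one {n : ℕ} (m : CVec X n) (θ : SimplexPt X) :
    ∏ x, θ.1 x ^ m.1 x ≤ 1 :=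
  Finset.prod_le_one (fun x _ => pow_nonneg (θ.2.1 x) _)
    (fun x _ => pow_le_one₀ (θ.2.1 x) (theta_le_one θ x))

lemma bern_nonneg {n : ℕ} (m : CVec X n) (θ : SimplexPt X) : 0 ≤ Bern m θ.1 :=
  mul_nonneg (Nat.cast_nonneg _)
    (Finset.prod_nonneg fun x _ => pow_nonneg (θ.2.1 x) _)

lemma bern_le {n : ℕ} (m : CVec X n) (θ : SimplexPt X) : Bern m θ.1 ≤ (nu m : ℝ) := by
  have h := prod_pow_le_one m θ
  calc Bern m θ.1 ≤ (nu m : ℝ) * 1 :=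
        mul_le_mul_of_nonneg_left h (Nat.cast_nonneg _)
    _ = (nu m : ℝ) := mul_one _

lemma CoMnP_bddBelow {n : ℕ} (g : CVec X n → ℝ) : BddBelow (Set.range (CoMnP g)) := by
  refine ⟨-∑ m : CVec X n, |g m| * (nu m : ℝ), ?_⟩
  rintro _ ⟨θ, rfl⟩
  unfold CoMnP CoMn
  rw [neg_le, ← Finset.sum_neg_distrib]
  apply Finset.sum_le_sum
  intro m _
  have h1 : |g m * Bern m θ.1| ≤ |g m| * (nu m : ℝ) := by
    rw [abs_mul]
    exact mul_le_mul_of_nonneg_left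
      (by rw [abs_of_nonneg (bern_nonneg m θ)]; exact bern_le m θ) (abs_nonneg _)
  have := neg_abs_le (g m * Bern m θ.1)
  nlinarith [abs_nonneg (g m * Bern m θ.1)]

end Aux1
set_option linter.unusedSectionVars false
set_option maxHeartbeats 1000000

section Aux2
variable {X : Type*} [Fintype X] [DecidableEq X]

lemma sum_bern_eq_one {k : ℕ} (θ : SimplexPt X) :
    ∑ κ : CVec X k, (nu κ : ℝ) * ∏ x, θ.1 x ^ κ.1 x = 1 := by
  have h := Finset.sum_pow_eq_sum_piAntidiag (Finset.univ : Finset X) θ.1 k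
  rw [θ.2.2, one_pow] at h
  rw [Finset.sum_subtype (p := fun f : X → ℕ => ∑ x, f x = k)
    (Finset.piAntidiag Finset.univ k) (fun f => by simp)
    (fun f => (Nat.multinomial Finset.univ f : ℝ) * ∏ x, θ.1 x ^ f x)] at h
  exact h.symm

lemma sum_nuSub {n k : ℕ} (m : CVec X n) (θ : SimplexPt X) :
    ∑ μ : CVec X (n + k), (nuSub μ m : ℝ) * ∏ x, θ.1 x ^ μ.1 x
      = ∏ x, θ.1 x ^ m.1 x := by
  classical
  have key : ∑ μ : CVec X (n + k), (nuSub μ m : ℝ) * ∏ x, θ.1 x ^ μ.1 x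
      = ∑ κ : CVec X k, (nu κ : ℝ) * ∏ x, θ.1 x ^ (m.1 x + κ.1 x) := by
    unfold nuSub
    rw [← Finset.sum_filter_add_sum_filter_not Finset.univ
      (fun μ : CVec X (n+k) => ∀ x, m.1 x ≤ μ.1 x)]
    have h2 : ∑ μ ∈ Finset.univ.filter (fun μ : CVec X (n+k) => ¬ ∀ x, m.1 x ≤ μ.1 x),
        ((if ∀ x, m.1 x ≤ μ.1 x then Nat.multinomial Finset.univ (fun x => μ.1 x - m.1 x) else 0 : ℕ) : ℝ)
          * ∏ x, θ.1 x ^ μ.1 x = 0 := by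
      apply Finset.sum_eq_zero
      intro μ hμ
      rw [Finset.mem_filter] at hμ
      rw [if_neg hμ.2]
      simp
    rw [h2, add_zero]
    refine Finset.sum_bij'
      (fun (μ : CVec X (n+k)) (hμ : μ ∈ Finset.univ.filter (fun μ : CVec X (n+k) => ∀ x, m.1 x ≤ μ.1 x)) =>
        (⟨fun x => μ.1 x - m.1 x, by
          have h := (Finset.mem_filter.mp hμ).2
          have := Finset.sum_tsub_distrib Finset.univ (fun x (_ : x ∈ Finset.univ) => h x)
          rw [this, μ.2, m.2, Nat.add_sub_cancel_left]⟩ : CVec X k))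
      (fun (κ : CVec X k) _ =>
        (⟨fun x => m.1 x + κ.1 x, by rw [Finset.sum_add_distrib, m.2, κ.2]⟩ : CVec X (n+k)))
      (fun μ hμ => Finset.mem_univ _)
      (fun κ _ => Finset.mem_filter.mpr ⟨Finset.mem_univ _, fun x => Nat.le_add_right _ _⟩)
      (fun μ hμ => by
        have h := (Finset.mem_filter.mp hμ).2
        apply Subtype.ext; funext x
        exact Nat.add_sub_cancel' (h x))
      (fun κ _ => by
        apply Subtype.ext; funext x
        simp)
      (fun μ hμ => by
        have h := (Finset.mem_filter.mp hμ).2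
        rw [if_pos h]
        congr 1
        exact Finset.prod_congr rfl fun x _ => by rw [Nat.add_sub_cancel' (h x)])
  rw [key]
  have : ∀ κ : CVec X k, (nu κ : ℝ) * ∏ x, θ.1 x ^ (m.1 x + κ.1 x)
      = (∏ x, θ.1 x ^ m.1 x) * ((nu κ : ℝ) * ∏ x, θ.1 x ^ κ.1 x) := by
    intro κ
    rw [show (∏ x, θ.1 x ^ (m.1 x + κ.1 x)) = (∏ x, θ.1 x ^ m.1 x) * ∏ x, θ.1 x ^ κ.1 x by
      rw [← Finset.prod_mul_distrib]; exact Finset.prod_congr rfl fun x _ => pow_add _ _ _]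
    ring
  rw [Finset.sum_congr rfl fun κ _ => this κ, ← Finset.mul_sum, sum_bern_eq_one (k := k) θ, mul_one]

lemma CoMnP_gbar {n k : ℕ} (g : CVec X n → ℝ) (θ : SimplexPt X) :
    CoMnP (fun μ : CVec X (n + k) => gbar g μ) θ = CoMnP g θ := by
  unfold CoMnP CoMn gbar Bern
  have step : ∀ μ : CVec X (n+k),
      (∑ m : CVec X n, ((nu m : ℝ) * (nuSub μ m : ℝ) / (nu μ : ℝ)) * g m)
        * ((nu μ : ℝ) * ∏ x, θ.1 x ^ μ.1 x)
      = ∑ m : CVec X n, (nu m : ℝ) * g m * ((nuSub μ m : ℝ) * ∏ x, θ.1 x ^ μ.1 x) := by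
    intro μ
    rw [Finset.sum_mul]
    refine Finset.sum_congr rfl fun m _ => ?_
    have hν : ((nu μ : ℝ)) ≠ 0 := Nat.cast_ne_zero.mpr (nu_pos μ).ne'
    field_simp
  rw [Finset.sum_congr rfl fun μ _ => step μ, Finset.sum_comm]
  refine Finset.sum_congr rfl fun m _ => ?_
  rw [← Finset.mul_sum, sum_nuSub m θ]
  ring

end Aux2
section Aux3
variable {X : Type*} [Fintype X] [DecidableEq X]

lemma descFactorial_pos' {N j : ℕ} (h : j ≤ N) : 0 < Nat.descFactorial N j := by
  rw [Nat.pos_iff_ne_zero]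
  intro h0
  rw [Nat.descFactorial_eq_zero_iff_lt] at h0
  omega

lemma hyp_formula {n k : ℕ} (μ : CVec X (n + k)) (m : CVec X n) :
    ((nu m : ℝ) * (nuSub μ m : ℝ)) / (nu μ : ℝ)
      = (nu m : ℝ) * (∏ x, (Nat.descFactorial (μ.1 x) (m.1 x) : ℝ))
          / (Nat.descFactorial (n + k) n : ℝ) := by
  by_cases hm : ∀ x, m.1 x ≤ μ.1 x
  · -- nat identity
    have hsub : ∑ x, (μ.1 x - m.1 x) = k := by
      rw [Finset.sum_tsub_distrib Finset.univ (fun x _ => hm x), μ.2, m.2,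
        Nat.add_sub_cancel_left]
    have e1 : (∏ x, (μ.1 x - m.1 x).factorial) * nuSub μ m = k.factorial := by
      unfold nuSub
      rw [if_pos hm]
      have := Nat.multinomial_spec Finset.univ (fun x => μ.1 x - m.1 x)
      rw [hsub] at this
      exact this
    have e3 : (∏ x, (μ.1 x).factorial) * nu μ = (n + k).factorial := by
      have := Nat.multinomial_spec Finset.univ μ.1
      rw [μ.2] at this
      exact this
    have e4 : k.factorial * Nat.descFactorial (n + k) n = (n + k).factorial := by
      have := Nat.factorial_mul_descFactorial (n := n + k) (k := n) (Nat.le_add_right n k)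
      rwa [Nat.add_sub_cancel_left] at this
    have e2 : ∏ x, ((μ.1 x - m.1 x).factorial * Nat.descFactorial (μ.1 x) (m.1 x))
        = ∏ x, (μ.1 x).factorial :=
      Finset.prod_congr rfl fun x _ => Nat.factorial_mul_descFactorial (hm x)
    have key : nuSub μ m * Nat.descFactorial (n + k) n
        = nu μ * ∏ x, Nat.descFactorial (μ.1 x) (m.1 x) := by
      have hA : 0 < ∏ x, (μ.1 x - m.1 x).factorial :=
        Finset.prod_pos fun x _ => Nat.factorial_pos _
      apply Nat.eq_of_mul_eq_mul_left hA
      calc (∏ x, (μ.1 x - m.1 x).factorial) * (nuSub μ m * Nat.descFactorial (n + k) n)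
          = ((∏ x, (μ.1 x - m.1 x).factorial) * nuSub μ m) * Nat.descFactorial (n + k) n := by
            ring
        _ = (n + k).factorial := by rw [e1, e4]
        _ = (∏ x, (μ.1 x).factorial) * nu μ := e3.symm
        _ = (∏ x, ((μ.1 x - m.1 x).factorial * Nat.descFactorial (μ.1 x) (m.1 x))) * nu μ := by
            rw [e2]
        _ = (∏ x, (μ.1 x - m.1 x).factorial) * (nu μ * ∏ x, Nat.descFactorial (μ.1 x) (m.1 x)) := by
            rw [Finset.prod_mul_distrib]; ring
    have hνμ : (0 : ℝ) < (nu μ : ℝ) := Nat.cast_pos.mpr (nu_pos μ)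
    have hD : (0 : ℝ) < (Nat.descFactorial (n + k) n : ℝ) :=
      Nat.cast_pos.mpr (descFactorial_pos' (Nat.le_add_right n k))
    rw [div_eq_div_iff hνμ.ne' hD.ne']
    have keyR : (nuSub μ m : ℝ) * (Nat.descFactorial (n + k) n : ℝ)
        = (nu μ : ℝ) * ∏ x, (Nat.descFactorial (μ.1 x) (m.1 x) : ℝ) := by
      exact_mod_cast congrArg (Nat.cast : ℕ → ℝ) key
    nlinarith [keyR]
  · push_neg at hm
    obtain ⟨x, hx⟩ := hm
    have h1 : nuSub μ m = 0 := by
      unfold nuSub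
      rw [if_neg (by push_neg; exact ⟨x, hx⟩)]
    have h2 : (∏ y, (Nat.descFactorial (μ.1 y) (m.1 y) : ℝ)) = 0 :=
      Finset.prod_eq_zero (Finset.mem_univ x)
        (by rw [Nat.cast_eq_zero, Nat.descFactorial_eq_zero_iff_lt]; exact hx)
    rw [h1, h2]
    simp

lemma pow_sub_descFactorial_le {N : ℕ} :
    ∀ (j μ : ℕ), μ ≤ N →
      (μ : ℝ) ^ j - (Nat.descFactorial μ j : ℝ) ≤ (j : ℝ) ^ 2 * (N : ℝ) ^ (j - 1)
  | 0, μ, _ => by simp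
  | 1, μ, _ => by simp
  | (j + 2), μ, hμ => by
    have IH := pow_sub_descFactorial_le (j + 1) μ hμ
    have hNnn : (0:ℝ) ≤ (N:ℝ) := Nat.cast_nonneg _
    have hμr : (μ:ℝ) ≤ (N:ℝ) := Nat.cast_le.mpr hμ
    have hμ0 : (0:ℝ) ≤ (μ:ℝ) := Nat.cast_nonneg _
    have hd_le : (Nat.descFactorial μ (j+1) : ℝ) ≤ (μ:ℝ) ^ (j+1) := by
      exact_mod_cast Nat.cast_le.mpr (Nat.descFactorial_le_pow μ (j+1))
    have hμN : (μ:ℝ) ^ (j+1) ≤ (N:ℝ) ^ (j+1) := pow_le_pow_left₀ hμ0 hμr _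
    have hcast : ((μ - (j+1) : ℕ) : ℝ) ≥ (μ : ℝ) - ((j:ℝ) + 1) := by
      rcases le_or_gt (j+1) μ with h | h
      · rw [Nat.cast_sub h]; push_cast; linarith
      · have : μ - (j+1) = 0 := by omega
        rw [this]
        have : (μ:ℝ) ≤ (j:ℝ) + 1 := by exact_mod_cast Nat.le_of_lt_succ (Nat.lt_succ_of_lt h)
        simp; linarith
    have hdesc : (Nat.descFactorial μ (j+2) : ℝ)
        = ((μ - (j+1) : ℕ) : ℝ) * (Nat.descFactorial μ (j+1) : ℝ) := by
      rw [Nat.descFactorial_succ]; push_cast; ring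
    have hd0 : (0:ℝ) ≤ (Nat.descFactorial μ (j+1) : ℝ) := Nat.cast_nonneg _
    -- μ^{j+2} - desc = μ*(μ^{j+1} - d) + (μ - (μ-(j+1)))*d
    have split : (μ:ℝ)^(j+2) - (Nat.descFactorial μ (j+2) : ℝ)
        = (μ:ℝ) * ((μ:ℝ)^(j+1) - (Nat.descFactorial μ (j+1) : ℝ))
          + ((μ:ℝ) - ((μ - (j+1) : ℕ) : ℝ)) * (Nat.descFactorial μ (j+1) : ℝ) := by
      rw [hdesc]; ring
    have hIHnn : (0:ℝ) ≤ (μ:ℝ)^(j+1) - (Nat.descFactorial μ (j+1) : ℝ) := by linarith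
    have t1 : (μ:ℝ) * ((μ:ℝ)^(j+1) - (Nat.descFactorial μ (j+1) : ℝ))
        ≤ (N:ℝ) * (((j:ℝ)+1)^2 * (N:ℝ)^j) := by
      have := mul_le_mul hμr IH hIHnn hNnn
      calc (μ:ℝ) * ((μ:ℝ)^(j+1) - (Nat.descFactorial μ (j+1) : ℝ))
          ≤ (N:ℝ) * (((j+1:ℕ):ℝ)^2 * (N:ℝ)^((j+1) - 1)) := this
        _ = (N:ℝ) * (((j:ℝ)+1)^2 * (N:ℝ)^j) := by push_cast; ring_nf
    have t2 : ((μ:ℝ) - ((μ - (j+1) : ℕ) : ℝ)) * (Nat.descFactorial μ (j+1) : ℝ)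
        ≤ ((j:ℝ)+1) * (N:ℝ)^(j+1) := by
      have h1 : (μ:ℝ) - ((μ - (j+1) : ℕ) : ℝ) ≤ (j:ℝ)+1 := by linarith
      have h2 : (0:ℝ) ≤ (μ:ℝ) - ((μ - (j+1) : ℕ) : ℝ) := by
        have : ((μ - (j+1) : ℕ) : ℝ) ≤ (μ:ℝ) := Nat.cast_le.mpr (Nat.sub_le _ _)
        linarith
      have hdN : (Nat.descFactorial μ (j+1) : ℝ) ≤ (N:ℝ)^(j+1) := le_trans hd_le hμN
      have := mul_le_mul h1 hdN hd0 (by positivity)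
      linarith
    have hNj : (N:ℝ) * (N:ℝ)^j = (N:ℝ)^(j+1) := by ring
    have final : (μ:ℝ)^(j+2) - (Nat.descFactorial μ (j+2) : ℝ)
        ≤ (((j:ℝ)+1)^2 + ((j:ℝ)+1)) * (N:ℝ)^(j+1) := by
      rw [split]
      calc _ ≤ (N:ℝ) * (((j:ℝ)+1)^2 * (N:ℝ)^j) + ((j:ℝ)+1) * (N:ℝ)^(j+1) := by linarith
        _ = (((j:ℝ)+1)^2 + ((j:ℝ)+1)) * (N:ℝ)^(j+1) := by ring
    have hcoef : (((j:ℝ)+1)^2 + ((j:ℝ)+1)) ≤ ((j:ℝ)+2)^2 := by nlinarith [Nat.cast_nonneg (α := ℝ) j]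
    have hNnn2 : (0:ℝ) ≤ (N:ℝ)^(j+1) := by positivity
    calc (μ:ℝ)^(j+2) - (Nat.descFactorial μ (j+2) : ℝ)
        ≤ (((j:ℝ)+1)^2 + ((j:ℝ)+1)) * (N:ℝ)^(j+1) := final
      _ ≤ ((j:ℝ)+2)^2 * (N:ℝ)^(j+1) := mul_le_mul_of_nonneg_right hcoef hNnn2
      _ = ((j+2:ℕ):ℝ)^2 * (N:ℝ)^((j+2)-1) := by push_cast; ring_nf

lemma pow_le_descFactorial' {N n : ℕ} (h : n ≤ N) :
    ∀ j, j ≤ n → (N - n) ^ j ≤ Nat.descFactorial N j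
  | 0, _ => le_refl 1
  | (j + 1), hj => by
    have IH := pow_le_descFactorial' h j (by omega)
    rw [pow_succ, Nat.descFactorial_succ]
    have h1 : N - n ≤ N - j := by omega
    calc (N - n) ^ j * (N - n) ≤ Nat.descFactorial N j * (N - j) :=
          Nat.mul_le_mul IH h1
      _ = (N - j) * Nat.descFactorial N j := Nat.mul_comm _ _

lemma prod_sub_prod_le {ι : Type*} [DecidableEq ι] (s : Finset ι) (a b A : ι → ℝ)
    (hb0 : ∀ x, 0 ≤ b x) (hba : ∀ x, b x ≤ a x) (haA : ∀ x, a x ≤ A x) :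
    ∏ x ∈ s, a x - ∏ x ∈ s, b x ≤ ∑ x ∈ s, (a x - b x) * ∏ y ∈ s.erase x, A y := by
  induction s using Finset.induction_on with
  | empty => simp
  | @insert x s hx IH =>
    rw [Finset.prod_insert hx, Finset.prod_insert hx, Finset.sum_insert hx]
    have ha0 : ∀ y, 0 ≤ a y := fun y => le_trans (hb0 y) (hba y)
    have hA0 : ∀ y, 0 ≤ A y := fun y => le_trans (ha0 y) (haA y)
    have hpa : ∏ y ∈ s, a y ≤ ∏ y ∈ s, A y :=
      Finset.prod_le_prod (fun y _ => ha0 y) (fun y _ => haA y)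
    have hpb : ∏ y ∈ s, b y ≤ ∏ y ∈ s, a y :=
      Finset.prod_le_prod (fun y _ => hb0 y) (fun y _ => hba y)
    have hpa0 : (0:ℝ) ≤ ∏ y ∈ s, a y := Finset.prod_nonneg fun y _ => ha0 y
    have step1 : a x * ∏ y ∈ s, a y - b x * ∏ y ∈ s, b y
        = (a x - b x) * ∏ y ∈ s, a y + b x * (∏ y ∈ s, a y - ∏ y ∈ s, b y) := by ring
    have e1 : (insert x s).erase x = s := by
      rw [Finset.erase_insert hx]
    have t1 : (a x - b x) * ∏ y ∈ s, a y
        ≤ (a x - b x) * ∏ y ∈ (insert x s).erase x, A y := by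
      rw [e1]
      exact mul_le_mul_of_nonneg_left hpa (by linarith [hba x])
    have t2 : b x * (∏ y ∈ s, a y - ∏ y ∈ s, b y)
        ≤ A x * ∑ y ∈ s, (a y - b y) * ∏ z ∈ s.erase y, A z := by
      have hd0 : (0:ℝ) ≤ ∏ y ∈ s, a y - ∏ y ∈ s, b y := by linarith
      have hbA : b x ≤ A x := le_trans (hba x) (haA x)
      calc b x * (∏ y ∈ s, a y - ∏ y ∈ s, b y)
          ≤ A x * (∏ y ∈ s, a y - ∏ y ∈ s, b y) := mul_le_mul_of_nonneg_right hbA hd0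
        _ ≤ A x * ∑ y ∈ s, (a y - b y) * ∏ z ∈ s.erase y, A z :=
            mul_le_mul_of_nonneg_left IH (hA0 x)
    have e2 : A x * ∑ y ∈ s, (a y - b y) * ∏ z ∈ s.erase y, A z
        = ∑ y ∈ s, (a y - b y) * ∏ z ∈ (insert x s).erase y, A z := by
      rw [Finset.mul_sum]
      refine Finset.sum_congr rfl fun y hy => ?_
      have hyx : y ≠ x := fun h => hx (h ▸ hy)
      have : (insert x s).erase y = insert x (s.erase y) := by
        rw [Finset.erase_insert_of_ne hyx.symm]
      rw [this, Finset.prod_insert (fun hmem => hx (Finset.mem_of_mem_erase hmem))]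
      ring
    calc a x * ∏ y ∈ s, a y - b x * ∏ y ∈ s, b y
        = (a x - b x) * ∏ y ∈ s, a y + b x * (∏ y ∈ s, a y - ∏ y ∈ s, b y) := step1
      _ ≤ (a x - b x) * ∏ y ∈ (insert x s).erase x, A y
            + ∑ y ∈ s, (a y - b y) * ∏ z ∈ (insert x s).erase y, A z := by
          rw [← e2]; linarith
end Aux3
section Aux4
variable {X : Type*} [Fintype X] [DecidableEq X]

lemma mu_le_N {n k : ℕ} (μ : CVec X (n + k)) (x : X) : μ.1 x ≤ n + k := by
  have h1 : μ.1 x ≤ ∑ y, μ.1 y :=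
    Finset.single_le_sum (fun i _ => Nat.zero_le _) (Finset.mem_univ x)
  rw [μ.2] at h1; exact h1

lemma m_le_n {n : ℕ} (m : CVec X n) (x : X) : m.1 x ≤ n := by
  have h1 : m.1 x ≤ ∑ y, m.1 y :=
    Finset.single_le_sum (fun i _ => Nat.zero_le _) (Finset.mem_univ x)
  rw [m.2] at h1; exact h1

lemma prod_pow_sub_desc_le {n k : ℕ} (μ : CVec X (n + k)) (m : CVec X n) :
    (∏ x, (μ.1 x : ℝ) ^ m.1 x) - ∏ x, (Nat.descFactorial (μ.1 x) (m.1 x) : ℝ)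
      ≤ (n : ℝ) ^ 2 * ((n + k : ℕ) : ℝ) ^ (n - 1) := by
  have hbound := prod_sub_prod_le Finset.univ
    (fun x => (μ.1 x : ℝ) ^ m.1 x)
    (fun x => (Nat.descFactorial (μ.1 x) (m.1 x) : ℝ))
    (fun x => ((n+k : ℕ) : ℝ) ^ m.1 x)
    (fun x => Nat.cast_nonneg _)
    (fun x => by
      show ((Nat.descFactorial (μ.1 x) (m.1 x) : ℝ)) ≤ (μ.1 x : ℝ) ^ m.1 x
      exact_mod_cast Nat.descFactorial_le_pow _ _)
    (fun x => pow_le_pow_left₀ (Nat.cast_nonneg _) (Nat.cast_le.mpr (mu_le_N μ x)) _)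
  try simp only at hbound
  refine le_trans hbound ?_
  have hterm : ∀ x : X, ((μ.1 x : ℝ) ^ m.1 x - (Nat.descFactorial (μ.1 x) (m.1 x) : ℝ))
      * ∏ y ∈ Finset.univ.erase x, ((n+k : ℕ) : ℝ) ^ m.1 y
      ≤ ((m.1 x : ℝ) ^ 2 * ((n+k : ℕ) : ℝ) ^ (n - 1)) := by
    intro x
    have herase : ∏ y ∈ Finset.univ.erase x, ((n+k : ℕ) : ℝ) ^ m.1 y
        = ((n+k : ℕ) : ℝ) ^ (n - m.1 x) := by
      rw [Finset.prod_pow_eq_pow_sum]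
      congr 1
      have := Finset.add_sum_erase Finset.univ m.1 (Finset.mem_univ x)
      have h2 := m.2
      omega
    rcases Nat.eq_zero_or_pos (m.1 x) with h0 | hpos
    · rw [h0]
      simp
    · have hL1 := pow_sub_descFactorial_le (N := n+k) (m.1 x) (μ.1 x) (mu_le_N μ x)
      have hprodnn : (0:ℝ) ≤ ∏ y ∈ Finset.univ.erase x, ((n+k : ℕ) : ℝ) ^ m.1 y :=
        Finset.prod_nonneg fun y _ => by positivity
      calc ((μ.1 x : ℝ) ^ m.1 x - (Nat.descFactorial (μ.1 x) (m.1 x) : ℝ))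
            * ∏ y ∈ Finset.univ.erase x, ((n+k : ℕ) : ℝ) ^ m.1 y
          ≤ ((m.1 x : ℝ) ^ 2 * ((n+k : ℕ) : ℝ) ^ (m.1 x - 1))
            * ∏ y ∈ Finset.univ.erase x, ((n+k : ℕ) : ℝ) ^ m.1 y :=
            mul_le_mul_of_nonneg_right hL1 hprodnn
        _ = (m.1 x : ℝ) ^ 2 * (((n+k : ℕ) : ℝ) ^ (m.1 x - 1) * ((n+k : ℕ) : ℝ) ^ (n - m.1 x)) := by
            rw [herase]; ring
        _ = (m.1 x : ℝ) ^ 2 * ((n+k : ℕ) : ℝ) ^ (n - 1) := by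
            rw [← pow_add]
            have h9 : m.1 x ≤ n := m_le_n m x
            rw [show (m.1 x - 1) + (n - m.1 x) = n - 1 by omega]
  refine le_trans (Finset.sum_le_sum fun x _ => hterm x) ?_
  rw [← Finset.sum_mul]
  apply mul_le_mul_of_nonneg_right _ (by positivity)
  have : ∀ x : X, (m.1 x : ℝ) ^ 2 ≤ (n : ℝ) * (m.1 x : ℝ) := by
    intro x
    have h1 : (m.1 x : ℝ) ≤ (n : ℝ) := Nat.cast_le.mpr (m_le_n m x)
    nlinarith [Nat.cast_nonneg (α := ℝ) (m.1 x)]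
  calc ∑ x, (m.1 x : ℝ) ^ 2 ≤ ∑ x, (n : ℝ) * (m.1 x : ℝ) :=
        Finset.sum_le_sum fun x _ => this x
    _ = (n : ℝ) * ∑ x, (m.1 x : ℝ) := by rw [Finset.mul_sum]
    _ = (n : ℝ) ^ 2 := by
        have : (∑ x, (m.1 x : ℝ)) = (n : ℝ) := by exact_mod_cast m.2
        rw [this]; ring

lemma hyp_close {n k : ℕ} (hn : 1 ≤ n) (hk : n ≤ k) (hpos : 0 < n + k)
    (μ : CVec X (n + k)) (m : CVec X n) :
    |((nu m : ℝ) * (nuSub μ m : ℝ)) / (nu μ : ℝ) - Bern m (freqPt hpos μ).1|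
      ≤ (nu m : ℝ) * ((n : ℝ) ^ 2 * 2 ^ n / k) := by
  have hk0 : 0 < k := lt_of_lt_of_le hn hk
  have hkR : (0:ℝ) < (k:ℝ) := Nat.cast_pos.mpr hk0
  have hNR : (0:ℝ) < ((n+k : ℕ):ℝ) := Nat.cast_pos.mpr hpos
  set d : ℝ := ∏ x, (Nat.descFactorial (μ.1 x) (m.1 x) : ℝ) with hd
  set P : ℝ := ∏ x, (μ.1 x : ℝ) ^ m.1 x with hP
  set D : ℝ := (Nat.descFactorial (n+k) n : ℝ) with hD
  have hDpos : (0:ℝ) < D := Nat.cast_pos.mpr (descFactorial_pos' (Nat.le_add_right n k))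
  have hd0 : 0 ≤ d := Finset.prod_nonneg fun x _ => Nat.cast_nonneg _
  have hdP : d ≤ P := Finset.prod_le_prod (fun x _ => Nat.cast_nonneg _)
    (fun x _ => by exact_mod_cast Nat.descFactorial_le_pow _ _)
  have hPN : P ≤ ((n+k : ℕ):ℝ) ^ n := by
    have : P ≤ ∏ x, ((n+k : ℕ) : ℝ) ^ m.1 x := Finset.prod_le_prod
      (fun x _ => by positivity)
      (fun x _ => pow_le_pow_left₀ (Nat.cast_nonneg _) (Nat.cast_le.mpr (mu_le_N μ x)) _)
    refine le_trans this ?_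
    rw [Finset.prod_pow_eq_pow_sum, m.2]
  have hDN : D ≤ ((n+k : ℕ):ℝ) ^ n := by
    exact_mod_cast Nat.cast_le.mpr (Nat.descFactorial_le_pow (n+k) n)
  have hNnD : ((n+k : ℕ):ℝ)^n - D ≤ (n:ℝ)^2 * ((n+k : ℕ):ℝ)^(n-1) := by
    have := pow_sub_descFactorial_le (N := n+k) n (n+k) (le_refl (n+k))
    exact this
  have hPd : P - d ≤ (n:ℝ)^2 * ((n+k : ℕ):ℝ)^(n-1) := prod_pow_sub_desc_le μ m
  have hkD : (k:ℝ)^n ≤ D := by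
    have h1 := pow_le_descFactorial' (Nat.le_add_right n k) n (le_refl n)
    have h2 : (n+k) - n = k := by omega
    rw [h2] at h1
    rw [hD]
    exact_mod_cast h1
  have hNn0 : (0:ℝ) < ((n+k : ℕ):ℝ)^n := by positivity
  have hkn0 : (0:ℝ) < (k:ℝ)^n := by positivity
  -- Bern at freq point
  have hbern : Bern m (freqPt hpos μ).1 = (nu m : ℝ) * (P / ((n+k : ℕ):ℝ)^n) := by
    show (nu m : ℝ) * (∏ x, ((μ.1 x : ℝ) / (((n+k):ℕ):ℝ)) ^ m.1 x) = _
    congr 1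
    calc ∏ x, ((μ.1 x : ℝ) / ((n+k : ℕ):ℝ)) ^ m.1 x
        = ∏ x, ((μ.1 x : ℝ) ^ m.1 x / ((n+k : ℕ):ℝ) ^ m.1 x) := by
          exact Finset.prod_congr rfl fun x _ => div_pow _ _ _
      _ = (∏ x, (μ.1 x : ℝ) ^ m.1 x) / ∏ x, ((n+k : ℕ):ℝ) ^ m.1 x := Finset.prod_div_distrib _ _
      _ = P / ((n+k : ℕ):ℝ)^n := by rw [Finset.prod_pow_eq_pow_sum, m.2]
  have hH : ((nu m : ℝ) * (nuSub μ m : ℝ)) / (nu μ : ℝ) = (nu m : ℝ) * (d / D) := by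
    rw [hyp_formula μ m, mul_div_assoc]
  -- the scalar estimate
  have hNle2k : ((n+k : ℕ):ℝ) ≤ 2 * (k:ℝ) := by
    have : (n+k) ≤ 2 * k := by omega
    exact_mod_cast this
  have hpowN : ((n+k : ℕ):ℝ)^n = ((n+k : ℕ):ℝ)^(n-1) * ((n+k : ℕ):ℝ) := by
    rw [← pow_succ, show (n-1)+1 = n by omega]
  have hpowk : (k:ℝ)^n = (k:ℝ)^(n-1) * (k:ℝ) := by
    rw [← pow_succ, show (n-1)+1 = n by omega]
  have lower : -((n:ℝ)^2 / k) ≤ d / D - P / ((n+k : ℕ):ℝ)^n := by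
    have h1 : d / ((n+k : ℕ):ℝ)^n ≤ d / D := by gcongr
    have h2 : -(((n:ℝ)^2 * ((n+k : ℕ):ℝ)^(n-1)) / ((n+k : ℕ):ℝ)^n) ≤ (d - P) / ((n+k : ℕ):ℝ)^n := by
      rw [← neg_div, div_le_div_iff_of_pos_right hNn0]
      linarith
    have h3 : ((n:ℝ)^2 * ((n+k : ℕ):ℝ)^(n-1)) / ((n+k : ℕ):ℝ)^n = (n:ℝ)^2 / ((n+k : ℕ):ℝ) := by
      rw [hpowN]
      have hN1 : (((n+k):ℕ):ℝ) ≠ 0 := hNR.ne'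
      have hN2 : (((n+k):ℕ):ℝ)^(n-1) ≠ 0 := by positivity
      field_simp
    have h4 : (n:ℝ)^2 / ((n+k : ℕ):ℝ) ≤ (n:ℝ)^2 / k := by
      apply div_le_div_of_nonneg_left (by positivity) hkR
      exact_mod_cast Nat.le_add_left k n
    have h5 : d / D - P / ((n+k : ℕ):ℝ)^n ≥ d / ((n+k : ℕ):ℝ)^n - P / ((n+k : ℕ):ℝ)^n := by linarith
    have h6 : d / ((n+k : ℕ):ℝ)^n - P / ((n+k : ℕ):ℝ)^n = (d - P) / ((n+k : ℕ):ℝ)^n := by ring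
    rw [h6] at h5
    calc -((n:ℝ)^2 / k) ≤ -((n:ℝ)^2 / ((n+k : ℕ):ℝ)) := by linarith
      _ = -(((n:ℝ)^2 * ((n+k : ℕ):ℝ)^(n-1)) / ((n+k : ℕ):ℝ)^n) := by rw [h3]
      _ ≤ (d - P) / ((n+k : ℕ):ℝ)^n := by linarith
      _ ≤ d / D - P / ((n+k : ℕ):ℝ)^n := h5
  have upper : d / D - P / ((n+k : ℕ):ℝ)^n ≤ (n:ℝ)^2 * 2^(n-1) / k := by
    have h1 : d / ((n+k : ℕ):ℝ)^n ≤ P / ((n+k : ℕ):ℝ)^n := by gcongr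
    have h2 : d / D - d / ((n+k : ℕ):ℝ)^n = d * (((n+k : ℕ):ℝ)^n - D) / (D * ((n+k : ℕ):ℝ)^n) := by
      field_simp
    have h3 : d * (((n+k : ℕ):ℝ)^n - D) / (D * ((n+k : ℕ):ℝ)^n) ≤ ((n+k : ℕ):ℝ)^n * (((n+k : ℕ):ℝ)^n - D) / (D * ((n+k : ℕ):ℝ)^n) := by
      gcongr
      · linarith
    have h4 : ((n+k : ℕ):ℝ)^n * (((n+k : ℕ):ℝ)^n - D) / (D * ((n+k : ℕ):ℝ)^n) = (((n+k : ℕ):ℝ)^n - D) / D := by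
      field_simp
    have h5 : (((n+k : ℕ):ℝ)^n - D) / D ≤ ((n:ℝ)^2 * ((n+k : ℕ):ℝ)^(n-1)) / (k:ℝ)^n := by
      gcongr
    have h6 : ((n+k : ℕ):ℝ)^(n-1) ≤ 2^(n-1) * (k:ℝ)^(n-1) := by
      calc ((n+k : ℕ):ℝ)^(n-1) ≤ (2*(k:ℝ))^(n-1) := pow_le_pow_left₀ (Nat.cast_nonneg _) hNle2k _
        _ = 2^(n-1) * (k:ℝ)^(n-1) := mul_pow _ _ _
    have h7 : ((n:ℝ)^2 * ((n+k : ℕ):ℝ)^(n-1)) / (k:ℝ)^n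
        ≤ ((n:ℝ)^2 * (2^(n-1) * (k:ℝ)^(n-1))) / (k:ℝ)^n := by
      gcongr
    have h8 : ((n:ℝ)^2 * (2^(n-1) * (k:ℝ)^(n-1))) / (k:ℝ)^n = (n:ℝ)^2 * 2^(n-1) / k := by
      rw [hpowk]
      have hk1 : (k:ℝ) ≠ 0 := hkR.ne'
      have hk2 : (k:ℝ)^(n-1) ≠ 0 := by positivity
      field_simp
    linarith
  have habs : |d / D - P / ((n+k : ℕ):ℝ)^n| ≤ (n:ℝ)^2 * 2^n / k := by
    rw [abs_le]
    have h2n : (2:ℝ)^(n-1) + 1 ≤ 2^n := by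
      have h1 : (1:ℝ) ≤ 2^(n-1) := one_le_pow₀ (by norm_num)
      have h2 : (2:ℝ)^n = 2 * 2^(n-1) := by
        rw [show ((2:ℝ) * 2^(n-1)) = 2^(n-1) * 2 by ring, ← pow_succ, show (n-1)+1 = n by omega]
      linarith
    have hn2 : (0:ℝ) ≤ (n:ℝ)^2 := by positivity
    constructor
    · have : (n:ℝ)^2 / k ≤ (n:ℝ)^2 * 2^n / k := by
        gcongr
        nlinarith [one_le_pow₀ (show (1:ℝ) ≤ 2 by norm_num) (n := n)]
      linarith
    · have : (n:ℝ)^2 * 2^(n-1) / k ≤ (n:ℝ)^2 * 2^n / k := by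
        gcongr
        · norm_num
        · omega
      linarith
  calc |((nu m : ℝ) * (nuSub μ m : ℝ)) / (nu μ : ℝ) - Bern m (freqPt hpos μ).1|
      = |(nu m : ℝ) * (d / D - P / ((n+k : ℕ):ℝ)^n)| := by rw [hH, hbern, ← mul_sub]
    _ = (nu m : ℝ) * |d / D - P / ((n+k : ℕ):ℝ)^n| := by
        rw [abs_mul, abs_of_nonneg (Nat.cast_nonneg _)]
    _ ≤ (nu m : ℝ) * ((n:ℝ)^2 * 2^n / k) :=
        mul_le_mul_of_nonneg_left habs (Nat.cast_nonneg _)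
end Aux4
section Aux5
variable {X : Type*} [Fintype X] [DecidableEq X] [Nonempty X]

instance : Nonempty (SimplexPt X) :=
  ⟨⟨fun x => if x = Classical.arbitrary X then 1 else 0,
    fun x => by dsimp only; split <;> norm_num, by simp⟩⟩

lemma CoMnP_add {n : ℕ} (f g : CVec X n → ℝ) (θ : SimplexPt X) :
    CoMnP (fun m => f m + g m) θ = CoMnP f θ + CoMnP g θ := by
  unfold CoMnP CoMn
  rw [← Finset.sum_add_distrib]
  exact Finset.sum_congr rfl fun m _ => by ring

lemma CoMnP_sub {n : ℕ} (f g : CVec X n → ℝ) (θ : SimplexPt X) :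
    CoMnP (fun m => f m - g m) θ = CoMnP f θ - CoMnP g θ := by
  unfold CoMnP CoMn
  rw [← Finset.sum_sub_distrib]
  exact Finset.sum_congr rfl fun m _ => by ring

lemma CoMnP_smul {n : ℕ} (l : ℝ) (f : CVec X n → ℝ) (θ : SimplexPt X) :
    CoMnP (fun m => l * f m) θ = l * CoMnP f θ := by
  unfold CoMnP CoMn
  rw [Finset.mul_sum]
  exact Finset.sum_congr rfl fun m _ => by ring

lemma gbar_est {n k : ℕ} (hn : 1 ≤ n) (hk : n ≤ k) (g : CVec X n → ℝ)
    (hpos : 0 < n + k) (μ : CVec X (n + k)) :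
    |gbar g μ - CoMnP g (freqPt hpos μ)|
      ≤ (∑ m : CVec X n, |g m| * (nu m : ℝ)) * ((n:ℝ)^2 * 2^n / k) := by
  unfold gbar CoMnP CoMn
  rw [← Finset.sum_sub_distrib]
  refine le_trans (Finset.abs_sum_le_sum_abs _ _) ?_
  rw [Finset.sum_mul]
  apply Finset.sum_le_sum
  intro m _
  have h := hyp_close hn hk hpos μ m
  calc |(nu m : ℝ) * (nuSub μ m : ℝ) / (nu μ : ℝ) * g m
          - g m * Bern m (freqPt hpos μ).1|
      = |g m| * |(nu m : ℝ) * (nuSub μ m : ℝ) / (nu μ : ℝ) - Bern m (freqPt hpos μ).1| := by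
        rw [← abs_mul]
        congr 1
        ring
    _ ≤ |g m| * ((nu m : ℝ) * ((n:ℝ)^2 * 2^n / k)) :=
        mul_le_mul_of_nonneg_left h (abs_nonneg _)
    _ = |g m| * (nu m : ℝ) * ((n:ℝ)^2 * 2^n / k) := by ring

lemma lemA (Q : ∀ n : ℕ, (CVec X n → ℝ) → ℝ)
    (hcoh : ∀ n : ℕ, 1 ≤ n → LowerPrevCoherent (Q n))
    (htc : QTimeConsistent Q) {n : ℕ} (hn : 1 ≤ n) (g : CVec X n → ℝ) :
    sInf (Set.range (CoMnP g)) ≤ Q n g := by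
  refine le_of_forall_pos_le_add ?_
  intro ε hε
  set C := (∑ m : CVec X n, |g m| * (nu m : ℝ)) * ((n:ℝ)^2 * 2^n) with hC
  have hC0 : 0 ≤ C := by
    apply mul_nonneg
    · exact Finset.sum_nonneg fun m _ => mul_nonneg (abs_nonneg _) (Nat.cast_nonneg _)
    · positivity
  set k := max n (Nat.floor (C / ε) + 1) with hk
  have hkn : n ≤ k := le_max_left _ _
  have hk0 : 0 < k := lt_of_lt_of_le hn hkn
  have hkR : (0:ℝ) < (k:ℝ) := Nat.cast_pos.mpr hk0
  have hCk : C / k ≤ ε := by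
    have h1 : C / ε < (Nat.floor (C / ε) + 1 : ℕ) := by
      push_cast
      exact Nat.lt_floor_add_one _
    have h2 : ((Nat.floor (C / ε) + 1 : ℕ) : ℝ) ≤ (k : ℝ) :=
      Nat.cast_le.mpr (le_max_right _ _)
    have h3 : C / ε < (k : ℝ) := lt_of_lt_of_le h1 h2
    have h4 : C < ε * k := by
      rw [div_lt_iff₀ hε] at h3
      linarith
    rw [div_le_iff₀ hkR]
    linarith
  have hpos : 0 < n + k := by omega
  have htceq : Q n g = Q (n + k) (gbar g) := by
    rw [htc n hn k g]
    congr 1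
    funext μ
    unfold gbar
    exact Finset.sum_congr rfl fun m _ => by ring
  have h1 : sInf (Set.range (gbar g : CVec X (n+k) → ℝ)) ≤ Q (n + k) (gbar g) :=
    (hcoh (n + k) (by omega)).1 _
  have h2 : sInf (Set.range (CoMnP g)) - ε ≤ sInf (Set.range (gbar g : CVec X (n+k) → ℝ)) := by
    apply le_csInf (Set.range_nonempty _)
    rintro _ ⟨μ, rfl⟩
    have hest := gbar_est hn hkn g hpos μ
    have hinf : sInf (Set.range (CoMnP g)) ≤ CoMnP g (freqPt hpos μ) :=
      csInf_le (CoMnP_bddBelow g) ⟨_, rfl⟩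
    have habs := (abs_le.mp hest).1
    have hrw : (∑ m : CVec X n, |g m| * (nu m : ℝ)) * ((n:ℝ)^2 * 2^n / k) = C / k := by
      rw [hC]; ring
    rw [hrw] at habs
    linarith
  linarith

lemma raiseQ (Q : ∀ n : ℕ, (CVec X n → ℝ) → ℝ)
    (htc : QTimeConsistent Q) {n N : ℕ} (hn : 1 ≤ n) (hnN : n ≤ N) (b : CVec X n → ℝ) :
    ∃ c : CVec X N → ℝ, Q N c = Q n b ∧ ∀ θ : SimplexPt X, CoMnP c θ = CoMnP b θ := by
  obtain ⟨k, rfl⟩ := Nat.exists_eq_add_of_le hnN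
  refine ⟨gbar b, ?_, fun θ => CoMnP_gbar b θ⟩
  rw [htc n hn k b]
  congr 1
  funext μ
  unfold gbar
  exact Finset.sum_congr rfl fun m _ => by ring

lemma welldefQ (Q : ∀ n : ℕ, (CVec X n → ℝ) → ℝ)
    (hcoh : ∀ n : ℕ, 1 ≤ n → LowerPrevCoherent (Q n))
    (htc : QTimeConsistent Q) {n n' : ℕ} (hn : 1 ≤ n) (hn' : 1 ≤ n')
    (b : CVec X n → ℝ) (b' : CVec X n' → ℝ)
    (heq : ∀ θ : SimplexPt X, CoMnP b θ = CoMnP b' θ) : Q n b = Q n' b' := by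
  obtain ⟨c, hc, hcp⟩ := raiseQ Q htc hn (Nat.le_add_right n n') b
  obtain ⟨c', hc', hcp'⟩ := raiseQ Q htc hn' (Nat.le_add_left n' n) b'
  have hN : 1 ≤ n + n' := by omega
  have hcc' : ∀ θ, CoMnP c θ = CoMnP c' θ := fun θ => by rw [hcp θ, heq θ, ← hcp' θ]
  have hzero : ∀ (u v : CVec X (n + n') → ℝ), (∀ θ, CoMnP u θ = CoMnP v θ) →
      0 ≤ Q (n + n') (fun μ => u μ - v μ) := by
    intro u v huv
    have h := lemA Q hcoh htc hN (fun μ => u μ - v μ)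
    have hfn : CoMnP (fun μ => u μ - v μ) = fun (_ : SimplexPt X) => (0:ℝ) := by
      funext θ
      rw [CoMnP_sub, huv θ, sub_self]
    rw [hfn, Set.range_const, csInf_singleton] at h
    exact h
  have h1 : 0 ≤ Q (n + n') (fun μ => c μ - c' μ) := hzero c c' hcc'
  have h2 : 0 ≤ Q (n + n') (fun μ => c' μ - c μ) := hzero c' c (fun θ => (hcc' θ).symm)
  have hsup := (hcoh (n + n') hN).2.2
  have key : Q (n + n') c = Q (n + n') c' := by
    apply le_antisymm
    · have := hsup c (fun μ => c' μ - c μ)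
      have he : c + (fun μ => c' μ - c μ) = c' := funext fun μ => by
        show c μ + (c' μ - c μ) = c' μ
        ring
      rw [he] at this
      linarith
    · have := hsup c' (fun μ => c μ - c' μ)
      have he : c' + (fun μ => c μ - c' μ) = c := funext fun μ => by
        show c' μ + (c μ - c' μ) = c μ
        ring
      rw [he] at this
      linarith
  rw [← hc, ← hc', key]

end Aux5
/-- a time consistent family of coherent count lower previsions induces a
well-defined functional `S` on the polynomial gambles, `S(p) := Q^n(b)` for any Bernstein
representation `p = ∑_m b(m) B_m`, and `S` is a coherent lower prevision on `𝒱(Σ_X)`. -/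
theorem stmt10 {X : Type*} [Fintype X] [DecidableEq X] [Nonempty X]
    (Q : ∀ n : ℕ, (CVec X n → ℝ) → ℝ)
    (hcoh : ∀ n : ℕ, 1 ≤ n → LowerPrevCoherent (Q n))
    (htc : QTimeConsistent Q) :
    ∃ S : (SimplexPt X → ℝ) → ℝ,
      (∀ (n : ℕ), 1 ≤ n → ∀ (b : CVec X n → ℝ) (p : SimplexPt X → ℝ),
        (∀ θ : SimplexPt X, p θ = CoMnP b θ) → S p = Q n b) ∧
      CoherentOnPoly S := by
  classical
  set S : (SimplexPt X → ℝ) → ℝ :=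
    fun p => if h : IsPolyGamble p then Q h.choose h.choose_spec.2.choose else 0 with hS
  have W : ∀ (n : ℕ), 1 ≤ n → ∀ (b : CVec X n → ℝ) (p : SimplexPt X → ℝ),
      (∀ θ : SimplexPt X, p θ = CoMnP b θ) → S p = Q n b := by
    intro n hn b p hp
    have hpg : IsPolyGamble p := ⟨n, hn, b, funext hp⟩
    rw [hS]
    dsimp only
    rw [dif_pos hpg]
    exact welldefQ Q hcoh htc hpg.choose_spec.1 hn hpg.choose_spec.2.choose b
      (fun θ => by rw [← congrFun hpg.choose_spec.2.choose_spec θ, hp θ])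
  refine ⟨S, W, ?_, ?_, ?_⟩
  · -- S p ≥ inf p
    rintro p ⟨n, hn, b, rfl⟩
    rw [W n hn b _ (fun θ => rfl)]
    exact lemA Q hcoh htc hn b
  · -- scaling
    rintro p ⟨n, hn, b, rfl⟩ l hl
    rw [W n hn b _ (fun θ => rfl),
        W n hn (fun m => l * b m) _ (fun θ => (CoMnP_smul l b θ).symm)]
    exact (hcoh n hn).2.1 b l hl
  · -- superadditivity
    rintro p q ⟨n, hn, b, rfl⟩ ⟨n', hn', b', rfl⟩
    obtain ⟨c, hc, hcp⟩ := raiseQ Q htc hn (Nat.le_add_right n n') b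
    obtain ⟨c', hc', hcp'⟩ := raiseQ Q htc hn' (Nat.le_add_left n' n) b'
    have hN : 1 ≤ n + n' := by omega
    rw [W n hn b _ (fun θ => rfl), W n' hn' b' _ (fun θ => rfl),
        W (n + n') hN (fun μ => c μ + c' μ) _ (fun θ => by
          show CoMnP b θ + CoMnP b' θ = _
          rw [CoMnP_add, hcp θ, hcp' θ])]
    rw [← hc, ← hc']
    have := (hcoh (n + n') hN).2.2 c c'
    have he : c + c' = fun μ => c μ + c' μ := rfl
    rw [he] at this
    exact this
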